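/- Let Σ(𝔄,𝔅,𝔆) be a BCO system on Hilbert spaces (X,U,Y) and let P = P* ∈ L(X), R = R* ∈ L(U), J = J* ∈ L(Y). Then Σ(𝔄,𝔅,𝔆) is (P,R,J)-scattering passive if and only if for each (x₀,u₀) in the admissible space 𝒱 one has 2 Re(𝔄x₀ | Px₀)_X ≤ (Ru₀ | 𝔅x₀)_U − (𝔆x₀ | J𝔆x₀)_Y, or equivalently 2 Re(𝔄x₀ | Px₀)_X ≤ (Ru₀ | u₀)_U − (𝔆x₀ | J𝔆x₀)_Y. Moreover, Σ(𝔄,𝔅,𝔆) is (P,R,J)-scattering energy preserving if and only if equality holds in these inequalities for all (x₀,u₀) ∈ 𝒱. -/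
import Mathlib


open Set Filter MeasureTheory
open scoped ComplexInnerProductSpace

noncomputable section

namespace NBCS

/-! ### Evolution families and non-autonomous Cauchy problems -/

section NormedDefs

variable {X U Y : Type*}
variable [NormedAddCommGroup X] [NormedSpace ℂ X]
variable [NormedAddCommGroup U] [NormedSpace ℂ U]
variable [NormedAddCommGroup Y] [NormedSpace ℂ Y]

/-- An evolution family on `X`, indexed by `Δ = {(t,s) : 0 ≤ s ≤ t}`. -/
def IsEvolutionFamily (W : ℝ → ℝ → X →L[ℂ] X) : Prop :=
  (∀ t, 0 ≤ t → W t t = 1) ∧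
  (∀ s r t : ℝ, 0 ≤ s → s ≤ r → r ≤ t → W t s = (W t r).comp (W r s)) ∧
  (∀ x : X, ContinuousOn (fun p : ℝ × ℝ => W p.1 p.2 x) {p : ℝ × ℝ | 0 ≤ p.2 ∧ p.2 ≤ p.1})

/-- A backward evolution family on `X`. -/
def IsBackwardEvolutionFamily (V : ℝ → ℝ → X →L[ℂ] X) : Prop :=
  (∀ t, 0 ≤ t → V t t = 1) ∧
  (∀ s r t : ℝ, 0 ≤ s → s ≤ r → r ≤ t → V t s = (V r s).comp (V t r)) ∧
  (∀ x : X, ContinuousOn (fun p : ℝ × ℝ => V p.1 p.2 x) {p : ℝ × ℝ | 0 ≤ p.2 ∧ p.2 ≤ p.1})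

/-- A classical solution (continuous on `[s,∞)`, `C¹` on `(s,∞)`) of the inhomogeneous
non-autonomous Cauchy problem `ẋ(t) = A(t)x(t) + F(t)` on `[s,∞)`, `x(s) = xs`, where the
(in general unbounded) operator `A(t)` is encoded by a globally defined linear map together
with its domain `domA t`. -/
def IsClassicalSolution (A : ℝ → X →ₗ[ℂ] X) (domA : ℝ → Submodule ℂ X)
    (F : ℝ → X) (s : ℝ) (xs : X) (x : ℝ → X) : Prop :=
  ContinuousOn x (Ici s) ∧ x s = xs ∧ (∀ t, s ≤ t → x t ∈ domA t) ∧
  (∀ t, s < t → HasDerivAt x (A t (x t) + F t) t) ∧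
  ContinuousOn (fun t => A t (x t) + F t) (Ioi s)

/-- A classical solution which is `C¹` up to the initial time `s`. -/
def IsClassicalSolutionC1 (A : ℝ → X →ₗ[ℂ] X) (domA : ℝ → Submodule ℂ X)
    (F : ℝ → X) (s : ℝ) (xs : X) (x : ℝ → X) : Prop :=
  x s = xs ∧ (∀ t, s ≤ t → x t ∈ domA t) ∧
  (∀ t, s ≤ t → HasDerivWithinAt x (A t (x t) + F t) (Ici s) t) ∧
  ContinuousOn (fun t => A t (x t) + F t) (Ici s)

/-- The family `{A(t)}` generates the evolution family `W` with regularity spaces `Yreg`. -/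
def Generates (A : ℝ → X →ₗ[ℂ] X) (domA : ℝ → Submodule ℂ X)
    (W : ℝ → ℝ → X →L[ℂ] X) (Yreg : ℝ → Submodule ℂ X) : Prop :=
  IsEvolutionFamily W ∧
  (∀ t, 0 ≤ t → Dense (Yreg t : Set X)) ∧
  (∀ t, 0 ≤ t → Yreg t ≤ domA t) ∧
  (∀ s t : ℝ, 0 ≤ s → s ≤ t → ∀ x ∈ Yreg s, W t s x ∈ Yreg t) ∧
  (∀ s, 0 ≤ s → ∀ xs ∈ Yreg s,
    IsClassicalSolution A domA (fun _ => 0) s xs (fun t => W t s xs)) ∧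
  (∀ s, 0 ≤ s → ∀ xs ∈ Yreg s, ∀ x, IsClassicalSolution A domA (fun _ => 0) s xs x →
    ∀ t, s ≤ t → x t = W t s xs)

/-- A classical solution of the backward problem `u'(s) = -A(s)u(s)` on `[0,t]`, `u(t) = xt`. -/
def IsBackwardSolution (A : ℝ → X →ₗ[ℂ] X) (domA : ℝ → Submodule ℂ X)
    (t : ℝ) (xt : X) (u : ℝ → X) : Prop :=
  u t = xt ∧ (∀ s ∈ Icc (0:ℝ) t, u s ∈ domA s) ∧
  (∀ s ∈ Icc (0:ℝ) t, HasDerivWithinAt u (-(A s (u s))) (Icc (0:ℝ) t) s) ∧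
  ContinuousOn (fun s => A s (u s)) (Icc (0:ℝ) t)

/-- The family `{A(t)}` generates the backward evolution family `V` with
regularity spaces `Yreg`. -/
def GeneratesBackward (A : ℝ → X →ₗ[ℂ] X) (domA : ℝ → Submodule ℂ X)
    (V : ℝ → ℝ → X →L[ℂ] X) (Yreg : ℝ → Submodule ℂ X) : Prop :=
  IsBackwardEvolutionFamily V ∧
  (∀ t, 0 ≤ t → Dense (Yreg t : Set X)) ∧
  (∀ t, 0 ≤ t → Yreg t ≤ domA t) ∧
  (∀ s t : ℝ, 0 ≤ s → s ≤ t → ∀ x ∈ Yreg t, V t s x ∈ Yreg s) ∧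
  (∀ t, 0 ≤ t → ∀ xt ∈ Yreg t, IsBackwardSolution A domA t xt (fun s => V t s xt)) ∧
  (∀ t, 0 ≤ t → ∀ xt ∈ Yreg t, ∀ u, IsBackwardSolution A domA t xt u →
    ∀ s ∈ Icc (0:ℝ) t, u s = V t s xt)

/-! ### `C₀`-semigroups and Kato's classes -/

/-- `T` is a strongly continuous one-parameter semigroup on `X`. -/
def IsC0Semigroup (T : ℝ → X →L[ℂ] X) : Prop :=
  T 0 = 1 ∧ (∀ s t : ℝ, 0 ≤ s → 0 ≤ t → T (s + t) = (T s).comp (T t)) ∧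
  ∀ x : X, ContinuousOn (fun t => T t x) (Ici (0:ℝ))

/-- `A` (with domain `domA`) is the generator of the `C₀`-semigroup `T`. -/
def IsGenerator (A : X →ₗ[ℂ] X) (domA : Submodule ℂ X) (T : ℝ → X →L[ℂ] X) : Prop :=
  IsC0Semigroup T ∧
  (∀ x : X, x ∈ domA ↔
    ∃ y, Tendsto (fun h : ℝ => h⁻¹ • (T h x - x)) (nhdsWithin 0 (Ioi 0)) (nhds y)) ∧
  (∀ x ∈ domA, Tendsto (fun h : ℝ => h⁻¹ • (T h x - x)) (nhdsWithin 0 (Ioi 0)) (nhds (A x)))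

/-- `A` generates a contraction `C₀`-semigroup on `X` (with respect to the given norm). -/
def GeneratesContractionSemigroup (A : X →ₗ[ℂ] X) (domA : Submodule ℂ X) : Prop :=
  ∃ T : ℝ → X →L[ℂ] X, IsGenerator A domA T ∧ ∀ t, 0 ≤ t → ‖T t‖ ≤ 1

/-- `A` generates a `C₀`-semigroup on `X` which is contractive with respect to the
(equivalent) norm `N`. -/
def GeneratesContractionSemigroupWrt (N : X → ℝ) (A : X →ₗ[ℂ] X) (domA : Submodule ℂ X) :
    Prop :=
  ∃ T : ℝ → X →L[ℂ] X, IsGenerator A domA T ∧ ∀ t, 0 ≤ t → ∀ x : X, N (T t x) ≤ N x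

/-- `N` is a norm on `X` which is equivalent to the original norm. -/
def IsEquivNorm (N : X → ℝ) : Prop :=
  (∀ x y : X, N (x + y) ≤ N x + N y) ∧ (∀ (c : ℂ) (x : X), N (c • x) = ‖c‖ * N x) ∧
  (∀ x : X, N x = 0 ↔ x = 0) ∧
  ∃ m M : ℝ, 0 < m ∧ 0 < M ∧ ∀ x : X, m * ‖x‖ ≤ N x ∧ N x ≤ M * ‖x‖

/-- The family `{A(t)}` is Kato-stable. -/
def KatoStable (A : ℝ → X →ₗ[ℂ] X) (domA : ℝ → Submodule ℂ X) : Prop :=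
  ∃ N : ℝ → X → ℝ,
    (∀ t, 0 ≤ t → IsEquivNorm (N t)) ∧
    (∀ T : ℝ, 0 ≤ T → ∃ c : ℝ, 0 ≤ c ∧ ∀ (x : X), ∀ s ∈ Icc (0:ℝ) T, ∀ t ∈ Icc (0:ℝ) T,
      |N t x - N s x| ≤ c * |t - s| * N s x) ∧
    (∀ t, 0 ≤ t → GeneratesContractionSemigroupWrt (N t) (A t) (domA t))

/-- The family `{A(t)}` belongs to the elementary Kato class: every `A(t)` generates a
contraction `C₀`-semigroup on `X`. -/
def ElementaryKatoClass (A : ℝ → X →ₗ[ℂ] X) (domA : ℝ → Submodule ℂ X) : Prop :=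
  ∀ t, 0 ≤ t → GeneratesContractionSemigroup (A t) (domA t)

/-- The family `{A(t)}` belongs to Kato's class: it is Kato-stable, the operators have the
common domain `D` and `A(·)` is strongly `C¹`. -/
def KatoClass (A : ℝ → X →ₗ[ℂ] X) (domA : ℝ → Submodule ℂ X) (D : Submodule ℂ X) : Prop :=
  KatoStable A domA ∧ (∀ t, 0 ≤ t → domA t = D) ∧
  ∀ x ∈ D, ContDiffOn ℝ 1 (fun t => A t x) (Ici (0:ℝ))

/-! ### Boundary control and observation systems -/

/-- Compatibility of the operator `B̃ ∈ L(U,X)` with the boundary control system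
`(𝔄, D(𝔄), 𝔅)`:  `B̃u ∈ D(𝔄)`, `𝔄B̃ ∈ L(U,X)` and `𝔅B̃u = u` for all `u ∈ U`. -/
def BtCompat (Af : X →ₗ[ℂ] X) (domA : Submodule ℂ X) (Bf : X →ₗ[ℂ] U)
    (Bt : U →L[ℂ] X) : Prop :=
  (∀ v : U, Bt v ∈ domA) ∧ (∃ c : ℝ, ∀ v : U, ‖Af (Bt v)‖ ≤ c * ‖v‖) ∧
  ∀ v : U, Bf (Bt v) = v

/-- `Σ(𝔄,𝔅,𝔆)` is a boundary control and observation (BCO) system: the main operator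
`A = 𝔄|_{D(𝔄) ∩ ker 𝔅}` generates a `C₀`-semigroup, there is a compatible `B̃ ∈ L(U,X)`,
and `𝔆` is bounded with respect to the graph norm of `𝔄`. -/
def IsBCO (Af : X →ₗ[ℂ] X) (domA : Submodule ℂ X) (Bf : X →ₗ[ℂ] U) (Cf : X →ₗ[ℂ] Y) :
    Prop :=
  (∃ T : ℝ → X →L[ℂ] X, IsGenerator Af (domA ⊓ LinearMap.ker Bf) T) ∧
  (∃ Bt : U →L[ℂ] X, BtCompat Af domA Bf Bt) ∧
  (∃ c : ℝ, ∀ x ∈ domA, ‖Cf x‖ ≤ c * (‖x‖ + ‖Af x‖))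

/-- A classical solution of the autonomous boundary control problem
`ẋ(t) = 𝔄x(t)`, `𝔅x(t) = u(t)`, `x(0) = x₀`. -/
def IsClassicalSolAut (Af : X →ₗ[ℂ] X) (domA : Submodule ℂ X) (Bf : X →ₗ[ℂ] U)
    (u : ℝ → U) (x₀ : X) (x : ℝ → X) : Prop :=
  x 0 = x₀ ∧ (∀ t, (0:ℝ) ≤ t → x t ∈ domA) ∧
  (∀ t, (0:ℝ) ≤ t → HasDerivWithinAt x (Af (x t)) (Ici (0:ℝ)) t) ∧
  ContinuousOn (fun t => Af (x t)) (Ici (0:ℝ)) ∧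
  ∀ t, (0:ℝ) ≤ t → Bf (x t) = u t

/-- A classical solution pair `(x,y)` of the autonomous BCO system. -/
def IsClassicalSolPairAut (Af : X →ₗ[ℂ] X) (domA : Submodule ℂ X) (Bf : X →ₗ[ℂ] U)
    (Cf : X →ₗ[ℂ] Y) (u : ℝ → U) (x₀ : X) (x : ℝ → X) (y : ℝ → Y) : Prop :=
  IsClassicalSolAut Af domA Bf u x₀ x ∧ ContinuousOn y (Ici (0:ℝ)) ∧
  ∀ t, (0:ℝ) ≤ t → y t = Cf (x t)

/-- A classical solution of the non-autonomous boundary control problem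
`ẋ(t) = 𝔄(t)x(t)`, `𝔅(t)x(t) = u(t)`, `x(s) = xs` on `[s,∞)`. -/
def IsClassicalSolN (Af : ℝ → X →ₗ[ℂ] X) (domA : ℝ → Submodule ℂ X)
    (Bf : ℝ → X →ₗ[ℂ] U) (u : ℝ → U) (s : ℝ) (xs : X) (x : ℝ → X) : Prop :=
  x s = xs ∧ (∀ t, s ≤ t → x t ∈ domA t) ∧
  (∀ t, s ≤ t → HasDerivWithinAt x (Af t (x t)) (Ici s) t) ∧
  ContinuousOn (fun t => Af t (x t)) (Ici s) ∧
  ∀ t, s ≤ t → Bf t (x t) = u t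

/-- A classical solution pair `(x,y)` of the non-autonomous BCO system. -/
def IsClassicalSolPairN (Af : ℝ → X →ₗ[ℂ] X) (domA : ℝ → Submodule ℂ X)
    (Bf : ℝ → X →ₗ[ℂ] U) (Cf : ℝ → X →ₗ[ℂ] Y)
    (u : ℝ → U) (s : ℝ) (xs : X) (x : ℝ → X) (y : ℝ → Y) : Prop :=
  IsClassicalSolN Af domA Bf u s xs x ∧ ContinuousOn y (Ici s) ∧
  ∀ t, s ≤ t → y t = Cf t (x t)

/-- `Σ_N(𝔄,𝔅,𝔆)` is a non-autonomous boundary control and observation (NBCO) system: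
each frozen-time system is a BCO system and the family of main operators generates the
evolution family `W` with regularity spaces `Yreg`. -/
def IsNBCO (Af : ℝ → X →ₗ[ℂ] X) (domA : ℝ → Submodule ℂ X) (Bf : ℝ → X →ₗ[ℂ] U)
    (Cf : ℝ → X →ₗ[ℂ] Y) (W : ℝ → ℝ → X →L[ℂ] X) (Yreg : ℝ → Submodule ℂ X) : Prop :=
  (∀ t, 0 ≤ t → IsBCO (Af t) (domA t) (Bf t) (Cf t)) ∧
  Generates Af (fun t => domA t ⊓ LinearMap.ker (Bf t)) W Yreg

/-- Well-posedness of the non-autonomous BCO system. -/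
def WellPosedN (Af : ℝ → X →ₗ[ℂ] X) (domA : ℝ → Submodule ℂ X) (Bf : ℝ → X →ₗ[ℂ] U)
    (Cf : ℝ → X →ₗ[ℂ] Y) : Prop :=
  ∀ τ : ℝ, 0 < τ → ∃ m : ℝ, 0 < m ∧ ∀ s, 0 ≤ s → s ≤ τ →
    ∀ (u : ℝ → U) (xs : X) (x : ℝ → X) (y : ℝ → Y),
      IsClassicalSolPairN Af domA Bf Cf u s xs x y →
      ‖x τ‖ ^ 2 + ∫ r in s..τ, ‖y r‖ ^ 2 ≤ m * (‖xs‖ ^ 2 + ∫ r in s..τ, ‖u r‖ ^ 2)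

/-- `u ∈ L²_loc([0,∞); V)`. -/
def L2loc {V : Type*} [NormedAddCommGroup V] (u : ℝ → V) : Prop :=
  ∀ T : ℝ, 0 < T →
    AEStronglyMeasurable u (volume.restrict (Icc (0:ℝ) T)) ∧
    IntegrableOn (fun r => ‖u r‖ ^ 2) (Icc (0:ℝ) T)

end NormedDefs

/-! ### Hilbert space notions -/

section HilbertDefs

variable {X U Y V : Type*}
variable [NormedAddCommGroup X] [InnerProductSpace ℂ X]
variable [NormedAddCommGroup U] [InnerProductSpace ℂ U]
variable [NormedAddCommGroup Y] [InnerProductSpace ℂ Y]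
variable [NormedAddCommGroup V] [InnerProductSpace ℂ V]

/-- A family of bounded operators each of which is self-adjoint. -/
def SelfAdjointFamily (M : ℝ → V →L[ℂ] V) : Prop :=
  ∀ t, 0 ≤ t → ∀ x y : V, ⟪M t x, y⟫ = ⟪x, M t y⟫

/-- A uniformly coercive family of bounded operators. -/
def UniformlyCoercive (M : ℝ → V →L[ℂ] V) : Prop :=
  ∃ β : ℝ, 0 < β ∧ ∀ t, 0 ≤ t → ∀ x : V, β * ‖x‖ ^ 2 ≤ (⟪M t x, x⟫).re

/-- `B` (with domain `domB`) is the adjoint of the (densely defined) operator `A`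
(with domain `domA`). -/
def IsAdjointOp (A : X →ₗ[ℂ] X) (domA : Submodule ℂ X) (B : X →ₗ[ℂ] X)
    (domB : Submodule ℂ X) : Prop :=
  (∀ y ∈ domB, ∀ x ∈ domA, ⟪B y, x⟫ = ⟪y, A x⟫) ∧
  (∀ y z : X, (∀ x ∈ domA, ⟪z, x⟫ = ⟪y, A x⟫) → y ∈ domB ∧ z = B y)

/-- The autonomous BCO system `Σ(𝔄,𝔅,𝔆)` is `(P,R,J)`-scattering passive. -/
def ScatteringPassive (Af : X →ₗ[ℂ] X) (domA : Submodule ℂ X) (Bf : X →ₗ[ℂ] U)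
    (Cf : X →ₗ[ℂ] Y) (P : X →L[ℂ] X) (R : U →L[ℂ] U) (J : Y →L[ℂ] Y) : Prop :=
  ∀ (u : ℝ → U) (x₀ : X) (x : ℝ → X) (y : ℝ → Y),
    IsClassicalSolPairAut Af domA Bf Cf u x₀ x y →
    ∀ t, (0:ℝ) ≤ t → ∀ d : ℝ,
      HasDerivWithinAt (fun τ => (⟪P (x τ), x τ⟫).re) d (Ici (0:ℝ)) t →
      d ≤ (⟪R (u t), u t⟫).re - (⟪y t, J (y t)⟫).re

/-- The autonomous BCO system `Σ(𝔄,𝔅,𝔆)` is `(P,R,J)`-scattering energy preserving. -/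
def ScatteringEnergyPreserving (Af : X →ₗ[ℂ] X) (domA : Submodule ℂ X) (Bf : X →ₗ[ℂ] U)
    (Cf : X →ₗ[ℂ] Y) (P : X →L[ℂ] X) (R : U →L[ℂ] U) (J : Y →L[ℂ] Y) : Prop :=
  ∀ (u : ℝ → U) (x₀ : X) (x : ℝ → X) (y : ℝ → Y),
    IsClassicalSolPairAut Af domA Bf Cf u x₀ x y →
    ∀ t, (0:ℝ) ≤ t → ∀ d : ℝ,
      HasDerivWithinAt (fun τ => (⟪P (x τ), x τ⟫).re) d (Ici (0:ℝ)) t →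
      d = (⟪R (u t), u t⟫).re - (⟪y t, J (y t)⟫).re

/-- The non-autonomous BCO system `Σ_N(𝔄,𝔅,𝔆)` is `(R,P,J)`-scattering passive;
here `P'` is the strong derivative of `P`. -/
def NScatteringPassive (Af : ℝ → X →ₗ[ℂ] X) (domA : ℝ → Submodule ℂ X)
    (Bf : ℝ → X →ₗ[ℂ] U) (Cf : ℝ → X →ₗ[ℂ] Y)
    (R : ℝ → U →L[ℂ] U) (P P' : ℝ → X →L[ℂ] X) (J : ℝ → Y →L[ℂ] Y) : Prop :=
  ∀ s, (0:ℝ) ≤ s → ∀ (u : ℝ → U) (xs : X) (x : ℝ → X) (y : ℝ → Y),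
    IsClassicalSolPairN Af domA Bf Cf u s xs x y →
    ∀ t, s ≤ t → ∀ d : ℝ,
      HasDerivWithinAt (fun τ => (⟪P τ (x τ), x τ⟫).re) d (Ici s) t →
      d + (⟪y t, J t (y t)⟫).re ≤ (⟪u t, R t (u t)⟫).re + (⟪P' t (x t), x t⟫).re

/-- The pointwise characterization of `(R,P,J)`-scattering passivity of the non-autonomous
BCO system on the admissible spaces `𝒱(t)`. -/
def NScatteringPassivePointwise (Af : ℝ → X →ₗ[ℂ] X) (domA : ℝ → Submodule ℂ X)
    (Bf : ℝ → X →ₗ[ℂ] U) (Cf : ℝ → X →ₗ[ℂ] Y)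
    (R : ℝ → U →L[ℂ] U) (P : ℝ → X →L[ℂ] X) (J : ℝ → Y →L[ℂ] Y) : Prop :=
  ∀ t, (0:ℝ) ≤ t → ∀ (x : X) (u : U), x ∈ domA t → Bf t x = u →
    2 * (⟪Af t x, P t x⟫).re ≤ (⟪R t u, Bf t x⟫).re - (⟪Cf t x, J t (Cf t x)⟫).re

end HilbertDefs

end NBCS
section AuxProofs

variable {X : Type*} [NormedAddCommGroup X] [NormedSpace ℂ X] [CompleteSpace X]

namespace BCOAux

lemma gcontinuous {T : ℝ → X →L[ℂ] X} (hT : NBCS.IsC0Semigroup T) (v : X) :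
    Continuous fun s : ℝ => T (max s 0) v :=
  (hT.2.2 v).comp_continuous (continuous_id.max continuous_const) fun s => le_max_right s 0

lemma ftc {g : ℝ → X} (hg : Continuous g) (t : ℝ) :
    HasDerivAt (fun a => ∫ s in (0:ℝ)..a, g s) (g t) t :=
  intervalIntegral.integral_hasDerivAt_right (hg.intervalIntegrable _ _)
    (hg.stronglyMeasurableAtFilter _ _) hg.continuousAt

/-- The integral of the (extended) orbit of `v` lies in the domain of the generator, and the
generator maps it to `T t v - v`. -/
lemma integral_mem {Af : X →ₗ[ℂ] X} {dA : Submodule ℂ X} {T : ℝ → X →L[ℂ] X}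
    (hgen : NBCS.IsGenerator Af dA T) (v : X) {t : ℝ} (ht : 0 ≤ t) :
    (∫ s in (0:ℝ)..t, T (max s 0) v) ∈ dA ∧
      Af (∫ s in (0:ℝ)..t, T (max s 0) v) = T (max t 0) v - v := by
  obtain ⟨⟨h0, hadd, hconts⟩, hmem, hder⟩ := hgen
  set g : ℝ → X := fun s => T (max s 0) v with hgdef
  have hg : Continuous g := gcontinuous ⟨h0, hadd, hconts⟩ v
  set G : ℝ → X := fun a => ∫ s in (0:ℝ)..a, g s with hGdef
  have hG0 : G 0 = 0 := intervalIntegral.integral_same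
  have hkey : ∀ h : ℝ, 0 < h →
      T h (G t) - G t = (G (t + h) - G t) - (G (0 + h) - G 0) := by
    intro h hh
    have e1 : T h (G t) = ∫ s in (0:ℝ)..t, T h (g s) :=
      ((T h).intervalIntegral_comp_comm (hg.intervalIntegrable _ _)).symm
    have e2 : (∫ s in (0:ℝ)..t, T h (g s)) = ∫ s in (0:ℝ)..t, g (s + h) := by
      apply intervalIntegral.integral_congr
      intro s hs
      rw [uIcc_of_le ht] at hs
      have hs0 : (0:ℝ) ≤ s := hs.1
      have hco : T (h + s) = (T h).comp (T s) := hadd h s hh.le hs0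
      simp only [g, max_eq_left hs0, max_eq_left (by linarith : (0:ℝ) ≤ s + h)]
      rw [add_comm s h, hco]; rfl
    have e3 : (∫ s in (0:ℝ)..t, g (s + h)) = ∫ s in (0:ℝ)+h..t+h, g s :=
      intervalIntegral.integral_comp_add_right g h
    have e4 : (∫ s in (0:ℝ)+h..t+h, g s) = G (t + h) - G h := by
      rw [zero_add]
      exact (intervalIntegral.integral_interval_sub_left (hg.intervalIntegrable _ _)
        (hg.intervalIntegrable _ _)).symm
    rw [e1, e2, e3, e4, hG0, zero_add]
    abel
  have l1 : Tendsto (fun h : ℝ => h⁻¹ • (G (t + h) - G t)) (nhdsWithin 0 (Ioi 0)) (nhds (g t)) :=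
    ((ftc hg t).tendsto_slope_zero).mono_left
      (nhdsWithin_mono _ fun x hx => mem_compl_singleton_iff.mpr (LT.lt.ne' hx))
  have l2 : Tendsto (fun h : ℝ => h⁻¹ • (G (0 + h) - G 0)) (nhdsWithin 0 (Ioi 0)) (nhds (g 0)) :=
    ((ftc hg 0).tendsto_slope_zero).mono_left
      (nhdsWithin_mono _ fun x hx => mem_compl_singleton_iff.mpr (LT.lt.ne' hx))
  have lmain : Tendsto (fun h : ℝ => h⁻¹ • (T h (G t) - G t)) (nhdsWithin 0 (Ioi 0))
      (nhds (g t - g 0)) := by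
    apply Tendsto.congr' _ (l1.sub l2)
    filter_upwards [self_mem_nhdsWithin] with h hh
    rw [hkey h hh]
    simp only [smul_sub]
  have hg0 : g 0 = v := by simp [g, h0]
  rw [hg0] at lmain
  have hmemG : G t ∈ dA := (hmem (G t)).2 ⟨g t - v, lmain⟩
  refine ⟨hmemG, ?_⟩
  exact tendsto_nhds_unique (hder (G t) hmemG) lmain

/-- Integral representation of the semigroup orbit of a point of the domain. -/
lemma orbit_eq {Af : X →ₗ[ℂ] X} {dA : Submodule ℂ X} {T : ℝ → X →L[ℂ] X}
    (hgen : NBCS.IsGenerator Af dA T) {z : X} (hz : z ∈ dA) {t : ℝ} (ht : 0 ≤ t) :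
    T t z = z + ∫ s in (0:ℝ)..t, T (max s 0) (Af z) := by
  obtain ⟨⟨h0, hadd, hconts⟩, hmem, hder⟩ := hgen
  set g : ℝ → X := fun s => T (max s 0) (Af z) with hgdef
  have hg : Continuous g := gcontinuous ⟨h0, hadd, hconts⟩ _
  set φ : ℝ → X := fun a => T a z - z - ∫ s in (0:ℝ)..a, g s with hφdef
  have hφcont : ContinuousOn φ (Icc 0 t) := by
    apply ContinuousOn.sub
    · exact ((hconts z).mono Icc_subset_Ici_self).sub continuousOn_const
    · exact fun a _ => ((ftc hg a).continuousAt.continuousWithinAt)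
  have hright : ∀ a ∈ Ico 0 t, HasDerivWithinAt φ ((fun _ => (0:X)) a) (Ici a) a := by
    intro a ha
    have hDint : HasDerivWithinAt (fun b => ∫ s in (0:ℝ)..b, g s) (g a) (Ici a) a :=
      (ftc hg a).hasDerivWithinAt
    have hDT : HasDerivWithinAt (fun b => T b z) (T a (Af z)) (Ici a) a := by
      rw [hasDerivWithinAt_iff_tendsto_slope, Ici_sdiff_left]
      have hsub : Tendsto (fun s : ℝ => s - a) (nhdsWithin a (Ioi a)) (nhdsWithin 0 (Ioi 0)) := by
        have h1 : Tendsto (fun s : ℝ => s - a) (nhdsWithin a (Ioi a)) (nhds 0) := by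
          have h2 : Tendsto (fun s : ℝ => s - a) (nhds a) (nhds (a - a)) :=
            (continuous_id.sub continuous_const).tendsto a
          rw [sub_self] at h2
          exact h2.mono_left nhdsWithin_le_nhds
        refine tendsto_nhdsWithin_of_tendsto_nhds_of_eventually_within _ h1 ?_
        filter_upwards [self_mem_nhdsWithin] with s hs
        simpa [sub_pos] using hs
      have hlim := ((T a).continuous.tendsto (Af z)).comp ((hder z hz).comp hsub)
      apply Tendsto.congr' _ hlim
      filter_upwards [self_mem_nhdsWithin] with s hs
      have hsa : 0 < s - a := sub_pos.2 hs
      have hco : T (a + (s - a)) = (T a).comp (T (s - a)) := hadd a (s - a) ha.1 hsa.le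
      have hTs : T s z = T a (T (s - a) z) := by
        have : a + (s - a) = s := by ring
        rw [this] at hco
        rw [hco]; rfl
      show (T a) ((s - a)⁻¹ • ((T (s - a)) z - z)) = slope (fun b => (T b) z) a s
      rw [slope_def_module, hTs, ← ContinuousLinearMap.map_sub]
      exact (T a).map_smul_of_tower _ _
    have hd : HasDerivWithinAt φ (T a (Af z) - g a) (Ici a) a := (hDT.sub_const z).sub hDint
    have hga : g a = T a (Af z) := by simp [g, max_eq_left ha.1]
    simpa [hga] using hd
  have hbound := norm_image_sub_le_of_norm_deriv_right_le_segment (C := 0) hφcont hright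
      (fun x _ => by simp) t (right_mem_Icc.2 ht)
  have hφ0 : φ 0 = 0 := by simp [φ, h0, intervalIntegral.integral_same]
  rw [hφ0, sub_zero, zero_mul] at hbound
  have hφt : φ t = 0 := norm_le_zero_iff.1 hbound
  simp only [hφdef] at hφt
  rw [sub_sub] at hφt
  exact sub_eq_zero.1 hφt

end BCOAux

end AuxProofs
section AuxProofs2

variable {X U Y : Type*}
variable [NormedAddCommGroup X] [NormedSpace ℂ X] [CompleteSpace X]
variable [NormedAddCommGroup U] [NormedSpace ℂ U]
variable [NormedAddCommGroup Y] [NormedSpace ℂ Y]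

namespace BCOAux

/-- Existence of a classical solution of the BCO system with constant input `u₀ = 𝔅x₀`,
for any admissible initial state `x₀ ∈ D(𝔄)`. -/
lemma exists_sol {Af : X →ₗ[ℂ] X} {dA : Submodule ℂ X} {Bf : X →ₗ[ℂ] U} {Cf : X →ₗ[ℂ] Y}
    (hBCO : NBCS.IsBCO Af dA Bf Cf) {x₀ : X} (hx₀ : x₀ ∈ dA) :
    ∃ x : ℝ → X,
      NBCS.IsClassicalSolPairAut Af dA Bf Cf (fun _ => Bf x₀) x₀ x (fun t => Cf (x t)) := by
  obtain ⟨⟨T, hgen⟩, ⟨Bt, hBt1, hBt2, hBt3⟩, ⟨c, hc⟩⟩ := hBCO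
  have hsg : NBCS.IsC0Semigroup T := hgen.1
  set u₀ : U := Bf x₀ with hu₀def
  set z₀ : X := x₀ - Bt u₀ with hz₀def
  have hz₀mem : z₀ ∈ dA ⊓ LinearMap.ker Bf := by
    refine Submodule.mem_inf.2 ⟨sub_mem hx₀ (hBt1 u₀), ?_⟩
    rw [LinearMap.mem_ker, map_sub, hBt3]
    simp [u₀]
  set f : X := Af (Bt u₀) with hfdef
  set g₁ : ℝ → X := fun s => T (max s 0) (Af z₀) with hg₁def
  set g₂ : ℝ → X := fun s => T (max s 0) f with hg₂def
  have hg₁ : Continuous g₁ := gcontinuous hsg _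
  have hg₂ : Continuous g₂ := gcontinuous hsg _
  set G₁ : ℝ → X := fun a => ∫ s in (0:ℝ)..a, g₁ s with hG₁def
  set G₂ : ℝ → X := fun a => ∫ s in (0:ℝ)..a, g₂ s with hG₂def
  set x : ℝ → X := fun τ => z₀ + G₁ τ + G₂ τ + Bt u₀ with hxdef
  have hG₁m := fun (τ : ℝ) (hτ : 0 ≤ τ) => integral_mem hgen (Af z₀) hτ
  have hG₂m := fun (τ : ℝ) (hτ : 0 ≤ τ) => integral_mem hgen f hτ
  have hxmem : ∀ τ, 0 ≤ τ → x τ ∈ dA := by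
    intro τ hτ
    exact add_mem (add_mem (add_mem (Submodule.mem_inf.1 hz₀mem).1
      (Submodule.mem_inf.1 (hG₁m τ hτ).1).1) (Submodule.mem_inf.1 (hG₂m τ hτ).1).1)
      (hBt1 u₀)
  have hAfx : ∀ τ, 0 ≤ τ → Af (x τ) = g₁ τ + g₂ τ := by
    intro τ hτ
    have e₁ : Af (G₁ τ) = g₁ τ - Af z₀ := by
      have := (hG₁m τ hτ).2
      rw [max_eq_left hτ] at this
      simpa [g₁, max_eq_left hτ] using this
    have e₂ : Af (G₂ τ) = g₂ τ - f := by
      have := (hG₂m τ hτ).2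
      rw [max_eq_left hτ] at this
      simpa [g₂, max_eq_left hτ] using this
    simp only [x, map_add, e₁, e₂, ← hfdef]
    abel
  have hx' : ∀ τ : ℝ, HasDerivAt x (g₁ τ + g₂ τ) τ := by
    intro τ
    have h1 : HasDerivAt (fun a => z₀ + G₁ a) (g₁ τ) τ := (ftc hg₁ τ).const_add z₀
    have h2 : HasDerivAt (fun a => z₀ + G₁ a + G₂ a) (g₁ τ + g₂ τ) τ := h1.add (ftc hg₂ τ)
    exact h2.add_const (Bt u₀)
  have hxcont : Continuous x := continuous_iff_continuousAt.2 fun τ => (hx' τ).continuousAt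
  have hAfcont : ContinuousOn (fun τ => Af (x τ)) (Ici (0:ℝ)) :=
    ((hg₁.add hg₂).continuousOn).congr fun τ hτ => hAfx τ hτ
  have hx0 : x 0 = x₀ := by
    simp [x, G₁, G₂, intervalIntegral.integral_same, z₀]
  have hBfx : ∀ τ, 0 ≤ τ → Bf (x τ) = u₀ := by
    intro τ hτ
    have k₀ : Bf z₀ = 0 := (Submodule.mem_inf.1 hz₀mem).2
    have k₁ : Bf (G₁ τ) = 0 := (Submodule.mem_inf.1 (hG₁m τ hτ).1).2
    have k₂ : Bf (G₂ τ) = 0 := (Submodule.mem_inf.1 (hG₂m τ hτ).1).2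
    simp only [x, map_add, k₀, k₁, k₂, hBt3, zero_add]
  refine ⟨x, ⟨⟨hx0, hxmem, ?_, hAfcont, hBfx⟩, ?_, fun t _ => rfl⟩⟩
  · intro t ht
    rw [hAfx t ht]
    exact (hx' t).hasDerivWithinAt
  · -- continuity of the output
    set c' : ℝ := max c 0 with hc'def
    have hc' : ∀ v ∈ dA, ‖Cf v‖ ≤ c' * (‖v‖ + ‖Af v‖) := by
      intro v hv
      exact (hc v hv).trans
        (mul_le_mul_of_nonneg_right (le_max_left _ _) (by positivity))
    intro t ht
    have t1 : Tendsto x (nhdsWithin t (Ici (0:ℝ))) (nhds (x t)) :=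
      (hxcont.tendsto t).mono_left nhdsWithin_le_nhds
    have t2 : Tendsto (fun s => Af (x s)) (nhdsWithin t (Ici (0:ℝ))) (nhds (Af (x t))) :=
      hAfcont t ht
    rw [ContinuousWithinAt, tendsto_iff_norm_sub_tendsto_zero]
    have hlim : Tendsto (fun s => c' * (‖x s - x t‖ + ‖Af (x s) - Af (x t)‖))
        (nhdsWithin t (Ici (0:ℝ))) (nhds 0) := by
      have a1 : Tendsto (fun s => ‖x s - x t‖) (nhdsWithin t (Ici (0:ℝ)))
          (nhds ‖x t - x t‖) := (t1.sub tendsto_const_nhds).norm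
      have a2 : Tendsto (fun s => ‖Af (x s) - Af (x t)‖) (nhdsWithin t (Ici (0:ℝ)))
          (nhds ‖Af (x t) - Af (x t)‖) := (t2.sub tendsto_const_nhds).norm
      have := (a1.add a2).const_mul c'
      simpa using this
    apply tendsto_of_tendsto_of_tendsto_of_le_of_le' tendsto_const_nhds hlim
    · filter_upwards with s using norm_nonneg _
    · filter_upwards [self_mem_nhdsWithin] with s hs
      have hmem' : x s - x t ∈ dA := sub_mem (hxmem s hs) (hxmem t ht)
      calc ‖Cf (x s) - Cf (x t)‖ = ‖Cf (x s - x t)‖ := by rw [map_sub]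
        _ ≤ c' * (‖x s - x t‖ + ‖Af (x s - x t)‖) := hc' _ hmem'
        _ = c' * (‖x s - x t‖ + ‖Af (x s) - Af (x t)‖) := by rw [map_sub]

end BCOAux

end AuxProofs2

section AuxProofs3

open scoped ComplexInnerProductSpace

namespace BCOAux

variable {X : Type*} [NormedAddCommGroup X] [InnerProductSpace ℂ X] [CompleteSpace X]

lemma selfAdjoint_inner {P : X →L[ℂ] X} (hP : IsSelfAdjoint P) (a b : X) :
    ⟪P a, b⟫ = ⟪a, P b⟫ := by
  rw [← ContinuousLinearMap.adjoint_inner_left, hP.adjoint_eq]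

lemma energy_deriv {P : X →L[ℂ] X} (hP : IsSelfAdjoint P) {x : ℝ → X} {x' : X}
    {s : Set ℝ} {t : ℝ} (hx : HasDerivWithinAt x x' s t) :
    HasDerivWithinAt (fun τ => (⟪P (x τ), x τ⟫).re) (2 * (⟪x', P (x t)⟫).re) s t := by
  have hPx : HasDerivWithinAt (fun τ => P (x τ)) (P x') s t := by
    have := (P.restrictScalars ℝ).hasFDerivAt.comp_hasDerivWithinAt t hx
    simpa [Function.comp_def] using this
  have h2 := hPx.inner ℂ hx
  have h3 := Complex.reCLM.hasFDerivAt.comp_hasDerivWithinAt t h2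
  have hval : Complex.reCLM (⟪P (x t), x'⟫ + ⟪P x', x t⟫) = 2 * (⟪x', P (x t)⟫).re := by
    have e1 : (⟪P (x t), x'⟫ : ℂ) = starRingEnd ℂ ⟪x', P (x t)⟫ := (inner_conj_symm _ _).symm
    have e2 : (⟪P x', x t⟫ : ℂ) = ⟪x', P (x t)⟫ := selfAdjoint_inner hP x' (x t)
    simp only [Complex.reCLM_apply, Complex.add_re, e1, e2, Complex.conj_re]
    ring
  rw [← hval]
  exact h3

lemma deriv_unique {f : ℝ → ℝ} {t d₁ d₂ : ℝ} (ht : 0 ≤ t)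
    (h₁ : HasDerivWithinAt f d₁ (Ici 0) t) (h₂ : HasDerivWithinAt f d₂ (Ici 0) t) :
    d₁ = d₂ := by
  have hu := uniqueDiffOn_Ici (0:ℝ) t ht
  rw [← h₁.derivWithin hu, ← h₂.derivWithin hu]

end BCOAux

end AuxProofs3

/-- Characterization of `(P,R,J)`-scattering passivity (and energy
preservation) of a BCO system `Σ(𝔄,𝔅,𝔆)` by the pointwise inequalities on the admissible
space `𝒱 = {(x₀,u₀) : x₀ ∈ D(𝔄), 𝔅x₀ = u₀}`. -/
theorem bco_scattering_passive_characterization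
    {X U Y : Type*}
    [NormedAddCommGroup X] [InnerProductSpace ℂ X] [CompleteSpace X]
    [NormedAddCommGroup U] [InnerProductSpace ℂ U] [CompleteSpace U]
    [NormedAddCommGroup Y] [InnerProductSpace ℂ Y] [CompleteSpace Y]
    (Af : X →ₗ[ℂ] X) (domA : Submodule ℂ X) (Bf : X →ₗ[ℂ] U) (Cf : X →ₗ[ℂ] Y)
    (hBCO : NBCS.IsBCO Af domA Bf Cf)
    (P : X →L[ℂ] X) (R : U →L[ℂ] U) (J : Y →L[ℂ] Y)
    (hP : IsSelfAdjoint P) (hR : IsSelfAdjoint R) (hJ : IsSelfAdjoint J) :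
    (NBCS.ScatteringPassive Af domA Bf Cf P R J ↔
      ∀ (x₀ : X) (u₀ : U), x₀ ∈ domA → Bf x₀ = u₀ →
        2 * (⟪Af x₀, P x₀⟫).re ≤ (⟪R u₀, Bf x₀⟫).re - (⟪Cf x₀, J (Cf x₀)⟫).re) ∧
    (NBCS.ScatteringPassive Af domA Bf Cf P R J ↔
      ∀ (x₀ : X) (u₀ : U), x₀ ∈ domA → Bf x₀ = u₀ →
        2 * (⟪Af x₀, P x₀⟫).re ≤ (⟪R u₀, u₀⟫).re - (⟪Cf x₀, J (Cf x₀)⟫).re) ∧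
    (NBCS.ScatteringEnergyPreserving Af domA Bf Cf P R J ↔
      ∀ (x₀ : X) (u₀ : U), x₀ ∈ domA → Bf x₀ = u₀ →
        2 * (⟪Af x₀, P x₀⟫).re = (⟪R u₀, Bf x₀⟫).re - (⟪Cf x₀, J (Cf x₀)⟫).re) ∧
    (NBCS.ScatteringEnergyPreserving Af domA Bf Cf P R J ↔
      ∀ (x₀ : X) (u₀ : U), x₀ ∈ domA → Bf x₀ = u₀ →
        2 * (⟪Af x₀, P x₀⟫).re = (⟪R u₀, u₀⟫).re - (⟪Cf x₀, J (Cf x₀)⟫).re) := by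
  have passive_iff : NBCS.ScatteringPassive Af domA Bf Cf P R J ↔
      ∀ (x₀ : X) (u₀ : U), x₀ ∈ domA → Bf x₀ = u₀ →
        2 * (⟪Af x₀, P x₀⟫).re ≤ (⟪R u₀, u₀⟫).re - (⟪Cf x₀, J (Cf x₀)⟫).re := by
    constructor
    · intro hpass x₀ u₀ hx hu
      obtain ⟨x, hsol⟩ := BCOAux.exists_sol hBCO hx
      rw [hu] at hsol
      have hx0 : x 0 = x₀ := hsol.1.1
      have hd : HasDerivWithinAt (fun τ => (⟪P (x τ), x τ⟫).re)
          (2 * (⟪Af (x 0), P (x 0)⟫).re) (Ici (0:ℝ)) 0 :=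
        BCOAux.energy_deriv hP (hsol.1.2.2.1 0 le_rfl)
      have h := hpass _ _ _ _ hsol 0 le_rfl _ hd
      rw [hx0] at h
      exact h
    · intro H u x₀ x y hsol t ht d hd
      have hD : HasDerivWithinAt (fun τ => (⟪P (x τ), x τ⟫).re)
          (2 * (⟪Af (x t), P (x t)⟫).re) (Ici (0:ℝ)) t :=
        BCOAux.energy_deriv hP (hsol.1.2.2.1 t ht)
      have hdD : d = 2 * (⟪Af (x t), P (x t)⟫).re := BCOAux.deriv_unique ht hd hD
      have h := H (x t) (u t) (hsol.1.2.1 t ht) (hsol.1.2.2.2.2 t ht)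
      rw [hdD, hsol.2.2 t ht]
      exact h
  have preserve_iff : NBCS.ScatteringEnergyPreserving Af domA Bf Cf P R J ↔
      ∀ (x₀ : X) (u₀ : U), x₀ ∈ domA → Bf x₀ = u₀ →
        2 * (⟪Af x₀, P x₀⟫).re = (⟪R u₀, u₀⟫).re - (⟪Cf x₀, J (Cf x₀)⟫).re := by
    constructor
    · intro hpass x₀ u₀ hx hu
      obtain ⟨x, hsol⟩ := BCOAux.exists_sol hBCO hx
      rw [hu] at hsol
      have hx0 : x 0 = x₀ := hsol.1.1
      have hd : HasDerivWithinAt (fun τ => (⟪P (x τ), x τ⟫).re)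
          (2 * (⟪Af (x 0), P (x 0)⟫).re) (Ici (0:ℝ)) 0 :=
        BCOAux.energy_deriv hP (hsol.1.2.2.1 0 le_rfl)
      have h := hpass _ _ _ _ hsol 0 le_rfl _ hd
      rw [hx0] at h
      exact h
    · intro H u x₀ x y hsol t ht d hd
      have hD : HasDerivWithinAt (fun τ => (⟪P (x τ), x τ⟫).re)
          (2 * (⟪Af (x t), P (x t)⟫).re) (Ici (0:ℝ)) t :=
        BCOAux.energy_deriv hP (hsol.1.2.2.1 t ht)
      have hdD : d = 2 * (⟪Af (x t), P (x t)⟫).re := BCOAux.deriv_unique ht hd hD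
      have h := H (x t) (u t) (hsol.1.2.1 t ht) (hsol.1.2.2.2.2 t ht)
      rw [hdD, hsol.2.2 t ht]
      exact h
  have conv_le : (∀ (x₀ : X) (u₀ : U), x₀ ∈ domA → Bf x₀ = u₀ →
        2 * (⟪Af x₀, P x₀⟫).re ≤ (⟪R u₀, Bf x₀⟫).re - (⟪Cf x₀, J (Cf x₀)⟫).re) ↔
      (∀ (x₀ : X) (u₀ : U), x₀ ∈ domA → Bf x₀ = u₀ →
        2 * (⟪Af x₀, P x₀⟫).re ≤ (⟪R u₀, u₀⟫).re - (⟪Cf x₀, J (Cf x₀)⟫).re) := by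
    constructor <;> intro h x₀ u₀ hx hu
    · have := h x₀ u₀ hx hu
      rwa [hu] at this
    · rw [hu]
      exact h x₀ u₀ hx hu
  have conv_eq : (∀ (x₀ : X) (u₀ : U), x₀ ∈ domA → Bf x₀ = u₀ →
        2 * (⟪Af x₀, P x₀⟫).re = (⟪R u₀, Bf x₀⟫).re - (⟪Cf x₀, J (Cf x₀)⟫).re) ↔
      (∀ (x₀ : X) (u₀ : U), x₀ ∈ domA → Bf x₀ = u₀ →
        2 * (⟪Af x₀, P x₀⟫).re = (⟪R u₀, u₀⟫).re - (⟪Cf x₀, J (Cf x₀)⟫).re) := by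
    constructor <;> intro h x₀ u₀ hx hu
    · have := h x₀ u₀ hx hu
      rwa [hu] at this
    · rw [hu]
      exact h x₀ u₀ hx hu
  exact ⟨passive_iff.trans conv_le.symm, passive_iff,
    preserve_iff.trans conv_eq.symm, preserve_iff⟩
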